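/- Let G be a graph with a tripod T = (A_1, A_2, A_3), and let G' be obtained from G by contracting the tripod (identifying each A_i to a single vertex a_i, with a_i adjacent to the union of neighbors of vertices of A_i, and a_1a_2a_3 a triangle). Then G is 3-colorable if and only if G' is 3-colorable. -/

import Mathlib

/-- `(A 0, A 1, A 2)` is a tripod in `G` with ordering `v : Fin k → V`:
disjoint stable sets covering `{v 0, ..., v (k-1)}`, with `v i ∈ A i` for
`i = 0,1,2`, the root `v 0, v 1, v 2` a triangle, and every vertex `v j` with
`j ≥ 3` having earlier neighbors in both classes other than its own. -/
def IsTripod {V : Type*} (G : SimpleGraph V) (A : Fin 3 → Set V)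
    (k : ℕ) (v : Fin k → V) : Prop :=
  3 ≤ k ∧
  Function.Injective v ∧
  (∀ i j : Fin 3, i ≠ j → Disjoint (A i) (A j)) ∧
  (∀ i : Fin 3, ∀ a ∈ A i, ∀ b ∈ A i, ¬ G.Adj a b) ∧
  ((⋃ i, A i) = Set.range v) ∧
  (∀ i : Fin 3, ∀ hi : (i : ℕ) < k, v ⟨i, hi⟩ ∈ A i) ∧
  (∀ (h0 : 0 < k) (h1 : 1 < k) (h2 : 2 < k),
    G.Adj (v ⟨0, h0⟩) (v ⟨1, h1⟩) ∧ G.Adj (v ⟨0, h0⟩) (v ⟨2, h2⟩) ∧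
      G.Adj (v ⟨1, h1⟩) (v ⟨2, h2⟩)) ∧
  (∀ j : Fin k, 3 ≤ (j : ℕ) → ∀ i : Fin 3, v j ∈ A i →
    ∀ i' : Fin 3, i' ≠ i →
      ∃ j' : Fin k, (j' : ℕ) < (j : ℕ) ∧ v j' ∈ A i' ∧ G.Adj (v j) (v j'))

/-- The sets `(A 0, A 1, A 2)` form a tripod in `G` for some ordering. -/
def IsTripodSets {V : Type*} (G : SimpleGraph V) (A : Fin 3 → Set V) : Prop :=
  ∃ (k : ℕ) (v : Fin k → V), IsTripod G A k v

/-- A maximal tripod: no vertex can be added to any class so that the result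
is still a tripod. -/
def MaximalTripod {V : Type*} (G : SimpleGraph V) (A : Fin 3 → Set V) : Prop :=
  IsTripodSets G A ∧
  ∀ x : V, x ∉ (⋃ i, A i) → ∀ i : Fin 3,
    ¬ IsTripodSets G (Function.update A i (insert x (A i)))
/-- The graph obtained from `G` by contracting the tripod `(A 0, A 1, A 2)`:
each class `A i` is identified to a single vertex (the `Sum.inr i` vertices),
adjacent to the union of the neighborhoods of the vertices of `A i`, with the
three contracted vertices forming a triangle. -/
def contractTripod {V : Type*} (G : SimpleGraph V) (A : Fin 3 → Set V) :
    SimpleGraph ({x : V // x ∉ ⋃ i, A i} ⊕ Fin 3) where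
  Adj x y :=
    match x, y with
    | Sum.inl a, Sum.inl b => G.Adj a.1 b.1
    | Sum.inl a, Sum.inr i => ∃ w ∈ A i, G.Adj a.1 w
    | Sum.inr i, Sum.inl b => ∃ w ∈ A i, G.Adj w b.1
    | Sum.inr i, Sum.inr j => i ≠ j
  symm := by
    constructor
    rintro (a | i) (b | j) h
    · exact h.symm
    · obtain ⟨w, hw, hadj⟩ := h
      exact ⟨w, hw, hadj.symm⟩
    · obtain ⟨w, hw, hadj⟩ := h
      exact ⟨w, hw, hadj.symm⟩
    · exact h.symm
  loopless := by
    constructor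
    rintro (a | i) h
    · exact G.irrefl h
    · exact h rfl

/-- A graph `G` with a tripod is 3-colorable iff the graph obtained by
contracting the tripod is 3-colorable. -/
theorem contractTripod_colorable_iff {V : Type*} (G : SimpleGraph V)
    (A : Fin 3 → Set V) (k : ℕ) (v : Fin k → V) (hT : IsTripod G A k v) :
    G.Colorable 3 ↔ (contractTripod G A).Colorable 3 := by
  obtain ⟨h3, hinj, hdisj, hstab, hcover, hmem, htri, hind⟩ := hT
  have h0 : (0:ℕ) < k := by omega
  have h1 : (1:ℕ) < k := by omega
  have h2 : (2:ℕ) < k := by omega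
  have huniq : ∀ x (i i' : Fin 3), x ∈ A i → x ∈ A i' → i = i' := by
    intro x i i' hi hi'
    by_contra h
    exact Set.disjoint_left.mp (hdisj i i' h) hi hi'
  constructor
  · rintro ⟨C⟩
    set col : Fin 3 → Fin 3 := fun i => C (v ⟨i.1, lt_of_lt_of_le i.isLt h3⟩)
      with hcoldef
    obtain ⟨t01, t02, t12⟩ := htri h0 h1 h2
    have d01 : C (v ⟨0, h0⟩) ≠ C (v ⟨1, h1⟩) := C.valid t01
    have d02 : C (v ⟨0, h0⟩) ≠ C (v ⟨2, h2⟩) := C.valid t02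
    have d12 : C (v ⟨1, h1⟩) ≠ C (v ⟨2, h2⟩) := C.valid t12
    have hcolne : ∀ i j : Fin 3, i ≠ j → col i ≠ col j := by
      intro i j hij
      fin_cases i <;> fin_cases j <;>
        first
          | exact absurd rfl hij
          | exact d01 | exact d02 | exact d12
          | exact d01.symm | exact d02.symm | exact d12.symm
    have key : ∀ n : ℕ, ∀ hn : n < k, ∀ i : Fin 3,
        v ⟨n, hn⟩ ∈ A i → C (v ⟨n, hn⟩) = col i := by
      intro n
      induction n using Nat.strong_induction_on with
      | _ n IH =>
        intro hn i hi
        by_cases h3n : n < 3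
        · have hmemn : v ⟨n, hn⟩ ∈ A ⟨n, h3n⟩ := hmem ⟨n, h3n⟩ hn
          have hieq : i = ⟨n, h3n⟩ := huniq _ _ _ hi hmemn
          subst hieq
          rfl
        · push_neg at h3n
          have hexists : ∃ i1 i2 : Fin 3, i1 ≠ i ∧ i2 ≠ i ∧ i1 ≠ i2 := by
            fin_cases i
            · exact ⟨1, 2, by decide, by decide, by decide⟩
            · exact ⟨0, 2, by decide, by decide, by decide⟩
            · exact ⟨0, 1, by decide, by decide, by decide⟩
          obtain ⟨i1, i2, hne1, hne2, hne12⟩ := hexists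
          obtain ⟨j1, hj1lt, hj1mem, hadj1⟩ :=
            hind ⟨n, hn⟩ h3n i hi i1 hne1
          obtain ⟨j2, hj2lt, hj2mem, hadj2⟩ :=
            hind ⟨n, hn⟩ h3n i hi i2 hne2
          have hc1 : C (v j1) = col i1 := IH j1.1 hj1lt j1.isLt i1 hj1mem
          have hc2 : C (v j2) = col i2 := IH j2.1 hj2lt j2.isLt i2 hj2mem
          have hx1 : C (v ⟨n, hn⟩) ≠ col i1 := hc1 ▸ C.valid hadj1
          have hx2 : C (v ⟨n, hn⟩) ≠ col i2 := hc2 ▸ C.valid hadj2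
          have h3fin : ∀ a b c x : Fin 3,
              a ≠ b → a ≠ c → b ≠ c → x ≠ b → x ≠ c → x = a := by
            intro a b c x hab hac hbc hxb hxc
            have ha := a.isLt; have hb := b.isLt
            have hc := c.isLt; have hx := x.isLt
            simp only [Ne, Fin.ext_iff] at hab hac hbc hxb hxc ⊢
            omega
          exact h3fin (col i) (col i1) (col i2) (C (v ⟨n, hn⟩))
            (hcolne i i1 (Ne.symm hne1)) (hcolne i i2 (Ne.symm hne2))
            (hcolne i1 i2 hne12) hx1 hx2
    have keyA : ∀ (w : V) (i : Fin 3), w ∈ A i → C w = col i := by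
      intro w i hw
      have hwr : w ∈ Set.range v := by
        rw [← hcover]; exact Set.mem_iUnion.mpr ⟨i, hw⟩
      obtain ⟨jj, hjj⟩ := hwr
      subst hjj
      exact key jj.1 jj.isLt i hw
    refine ⟨SimpleGraph.Coloring.mk
      (fun x => match x with
        | Sum.inl a => C a.1
        | Sum.inr i => col i) ?_⟩
    rintro (a | i) (b | j) hadj
    · exact C.valid hadj
    · obtain ⟨w, hw, hwa⟩ := hadj
      have := keyA w j hw
      simpa [this] using C.valid hwa
    · obtain ⟨w, hw, hwa⟩ := hadj
      have := keyA w i hw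
      simpa [this] using C.valid hwa
    · exact hcolne i j hadj
  · rintro ⟨D⟩
    classical
    refine ⟨SimpleGraph.Coloring.mk
      (fun x => if h : x ∈ ⋃ i, A i
        then D (Sum.inr (Set.mem_iUnion.mp h).choose)
        else D (Sum.inl ⟨x, h⟩)) ?_⟩
    intro x y hxy
    by_cases hx : x ∈ ⋃ i, A i <;> by_cases hy : y ∈ ⋃ i, A i
    · simp only [dif_pos hx, dif_pos hy]
      have hxi := (Set.mem_iUnion.mp hx).choose_spec
      have hyj := (Set.mem_iUnion.mp hy).choose_spec
      have hij : (Set.mem_iUnion.mp hx).choose ≠ (Set.mem_iUnion.mp hy).choose := by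
        intro h
        exact hstab _ x hxi y (h ▸ hyj) hxy
      exact D.valid (show (contractTripod G A).Adj _ _ from hij)
    · simp only [dif_pos hx, dif_neg hy]
      have hxi := (Set.mem_iUnion.mp hx).choose_spec
      exact D.valid (show (contractTripod G A).Adj _ _ from ⟨x, hxi, hxy⟩)
    · simp only [dif_neg hx, dif_pos hy]
      have hyj := (Set.mem_iUnion.mp hy).choose_spec
      exact D.valid (show (contractTripod G A).Adj _ _ from ⟨y, hyj, hxy⟩)
    · simp only [dif_neg hx, dif_neg hy]
      exact D.valid (show (contractTripod G A).Adj _ _ from hxy)
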